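/- For all positive integers q, m, t with q ≥ 2 and t ≤ m, there exists a C(m,t)·2^t-regular PDA with parameters (C(m,t)·q^{2t}, 2^m·q^m, 2^m·q^m·(1 − ((q−1)/q)^t), 2^{m−t}·(q−1)^t·q^{m+t}). -/

import Mathlib

open Finset

/-- A (K,F,Z,S) placement delivery array: an F×K array over {*} ∪ [1:S],
    with `none` playing the role of `*`. Columns are indexed by `κ`. -/
def IsPDA {F S : ℕ} {κ : Type} [Fintype κ]
    (Z : ℕ) (P : Fin F → κ → Option (Fin S)) : Prop :=
  -- C1: each column contains exactly Z stars
  (∀ k : κ, (Finset.univ.filter (fun j : Fin F => P j k = none)).card = Z) ∧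
  -- C2: every integer occurs at least once
  (∀ s : Fin S, ∃ j k, P j k = some s) ∧
  -- C3: the 2×2 star-crossing condition
  (∀ j₁ j₂ : Fin F, ∀ k₁ k₂ : κ, ∀ s : Fin S,
    (j₁, k₁) ≠ (j₂, k₂) → P j₁ k₁ = some s → P j₂ k₂ = some s →
    P j₁ k₂ = none ∧ P j₂ k₁ = none)

/-- `P` is `g`-regular: every integer appears exactly `g` times. -/
def PDARegular {F S : ℕ} {κ : Type} [Fintype κ]
    (g : ℕ) (P : Fin F → κ → Option (Fin S)) : Prop :=
  ∀ s : Fin S, (Finset.univ.filter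
    (fun jk : Fin F × κ => P jk.1 jk.2 = some s)).card = g

/-- A base PDA with parameter `lam`: a PDA with `lam ∣ F`, `lam ∣ Z`,
    star pattern row-periodic with period `F/lam` (C4), and a star-row
    assignment `φ` into the first `F/lam` rows with all fibers of size
    `lam*S/F` (C5, stated multiplicatively: `card * F = lam * S`). -/
def IsBasePDA {F S : ℕ} {κ : Type} [Fintype κ]
    (Z lam : ℕ) (P : Fin F → κ → Option (Fin S)) : Prop :=
  IsPDA Z P ∧ 0 < lam ∧ lam ∣ F ∧ lam ∣ Z ∧
  (∀ j₁ j₂ : Fin F, ∀ k : κ, j₁.val % (F / lam) = j₂.val % (F / lam) →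
    (P j₁ k = none ↔ P j₂ k = none)) ∧
  (∃ φ : Fin S → Fin F, (∀ s, (φ s).val < F / lam) ∧
    (∀ s : Fin S, ∀ j : Fin F, ∀ k : κ, P j k = some s → P (φ s) k = none) ∧
    (∀ r : Fin F, r.val < F / lam →
      (Finset.univ.filter (fun s : Fin S => φ s = r)).card * F = lam * S))

namespace SchemeC

variable {q : ℕ}

/-- Unordered pairs of distinct elements of `Fin q`, as ordered pairs `(x,y)` with `x < y`. -/
abbrev Pairs (q : ℕ) := {p : Fin q × Fin q // p.1 < p.2}

/-- Select an element of a pair by a bit. -/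
def sel (p : Pairs q) (b : Bool) : Fin q := if b then p.1.2 else p.1.1

lemma sel_ne (p : Pairs q) (b : Bool) : sel p b ≠ sel p (!b) := by
  cases b <;> simp [sel]
  · exact ne_of_lt p.2
  · exact (ne_of_lt p.2).symm

/-- Make a pair out of two distinct elements. -/
def mkP (x y : Fin q) (h : x ≠ y) : Pairs q :=
  if hxy : x < y then ⟨(x, y), hxy⟩ else ⟨(y, x), (h.lt_or_gt.resolve_left hxy)⟩

/-- The position bit of `x` in `mkP x y`. -/
def bitOf (x y : Fin q) : Bool := decide (y < x)

lemma sel_mkP_bit (x y : Fin q) (h : x ≠ y) : sel (mkP x y h) (bitOf x y) = x := by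
  unfold mkP bitOf sel
  by_cases hxy : x < y
  · rw [dif_pos hxy]
    have : ¬ y < x := lt_asymm hxy
    simp [this]
  · rw [dif_neg hxy]
    have hyx : y < x := h.lt_or_gt.resolve_left hxy
    simp [hyx]

lemma sel_mkP_notbit (x y : Fin q) (h : x ≠ y) : sel (mkP x y h) (!bitOf x y) = y := by
  unfold mkP bitOf sel
  by_cases hxy : x < y
  · rw [dif_pos hxy]
    have : ¬ y < x := lt_asymm hxy
    simp [this]
  · rw [dif_neg hxy]
    have hyx : y < x := h.lt_or_gt.resolve_left hxy
    simp [hyx]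

lemma sel_false (p : Pairs q) : sel p false = p.1.1 := rfl
lemma sel_true (p : Pairs q) : sel p true = p.1.2 := rfl

lemma mkP_sel (p : Pairs q) (b : Bool) (h : sel p b ≠ sel p (!b)) :
    mkP (sel p b) (sel p (!b)) h = p := by
  cases b
  · simp only [Bool.not_false, sel_false, sel_true] at h ⊢
    unfold mkP
    rw [dif_pos p.2]
  · simp only [Bool.not_true, sel_true, sel_false] at h ⊢
    unfold mkP
    rw [dif_neg (lt_asymm p.2)]

lemma bitOf_sel (p : Pairs q) (b : Bool) : bitOf (sel p b) (sel p (!b)) = b := by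
  cases b
  · simp only [Bool.not_false, sel_false, sel_true, bitOf, decide_eq_false_iff_not]
    exact lt_asymm p.2
  · simp only [Bool.not_true, sel_true, sel_false, bitOf, decide_eq_true_eq]
    exact p.2

/-- Row alphabet at one coordinate. -/
abbrev B (q : ℕ) := Bool × Fin q

/-- The row of the `b`-th element of the base class with starrer `s` and pair `p`. -/
def baseRow (s : B q) (p : Pairs q) (b : Bool) : B q := (!s.1, sel p b)

/-- The column of the `b`-th element of the base class with starrer `s` and pair `p`. -/
def baseCol (s : B q) (p : Pairs q) (b : Bool) : Fin q × Fin q :=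
  if s.1 then (sel p (!b), s.2) else (s.2, sel p (!b))

/-- The base star condition (slot rule). -/
def baseStar (r : B q) (k : Fin q × Fin q) : Prop :=
  if r.1 then r.2 = k.2 else r.2 = k.1

instance (r : B q) (k : Fin q × Fin q) : Decidable (baseStar r k) := by
  unfold baseStar; exact inferInstance

/- decoding -/
def dStar (r : B q) (k : Fin q × Fin q) : B q := if r.1 then (false, k.1) else (true, k.2)
def dOther (r : B q) (k : Fin q × Fin q) : Fin q := if r.1 then k.2 else k.1

lemma dOther_ne {r : B q} {k : Fin q × Fin q} (h : ¬ baseStar r k) : r.2 ≠ dOther r k := by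
  rcases r with ⟨a, β⟩
  cases a <;> simpa [baseStar, dOther] using h

def dPair (r : B q) (k : Fin q × Fin q) (h : ¬ baseStar r k) : Pairs q :=
  mkP r.2 (dOther r k) (dOther_ne h)

def dBit (r : B q) (k : Fin q × Fin q) : Bool := bitOf r.2 (dOther r k)

lemma base_own (s : B q) (p : Pairs q) (b : Bool) :
    ¬ baseStar (baseRow s p b) (baseCol s p b) := by
  rcases s with ⟨a, ρ⟩
  cases a <;> simp [baseStar, baseRow, baseCol] <;> exact sel_ne p b

lemma base_cross (s : B q) (p : Pairs q) (b : Bool) :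
    baseStar (baseRow s p b) (baseCol s p (!b)) := by
  rcases s with ⟨a, ρ⟩
  cases a <;> simp [baseStar, baseRow, baseCol]

lemma base_starrer (s : B q) (p : Pairs q) (b : Bool) : baseStar s (baseCol s p b) := by
  rcases s with ⟨a, ρ⟩
  cases a <;> simp [baseStar, baseCol]

lemma dStar_enc (s : B q) (p : Pairs q) (b : Bool) :
    dStar (baseRow s p b) (baseCol s p b) = s := by
  rcases s with ⟨a, ρ⟩
  cases a <;> simp [dStar, baseRow, baseCol]

lemma dOther_enc (s : B q) (p : Pairs q) (b : Bool) :
    dOther (baseRow s p b) (baseCol s p b) = sel p (!b) := by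
  rcases s with ⟨a, ρ⟩
  cases a <;> simp [dOther, baseRow, baseCol]

lemma dPair_enc (s : B q) (p : Pairs q) (b : Bool) (h) :
    dPair (baseRow s p b) (baseCol s p b) h = p := by
  unfold dPair
  have h2 : (baseRow s p b).2 = sel p b := rfl
  have h3 := dOther_enc s p b
  -- rewrite the arguments of mkP
  have : ∀ (x y : Fin q) (hxy : x ≠ y), x = sel p b → y = sel p (!b) → mkP x y hxy = p := by
    rintro x y hxy rfl rfl; exact mkP_sel p b hxy
  exact this _ _ _ h2 h3

lemma dBit_enc (s : B q) (p : Pairs q) (b : Bool) :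
    dBit (baseRow s p b) (baseCol s p b) = b := by
  unfold dBit
  rw [show (baseRow s p b).2 = sel p b from rfl, dOther_enc]
  exact bitOf_sel p b

lemma enc_dec_row {r : B q} {k : Fin q × Fin q} (h : ¬ baseStar r k) :
    baseRow (dStar r k) (dPair r k h) (dBit r k) = r := by
  rcases r with ⟨a, β⟩
  cases a <;>
    simp [baseRow, dStar, dPair, dBit] <;>
    exact sel_mkP_bit _ _ _

lemma enc_dec_col {r : B q} {k : Fin q × Fin q} (h : ¬ baseStar r k) :
    baseCol (dStar r k) (dPair r k h) (dBit r k) = k := by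
  rcases r with ⟨a, β⟩ <;> rcases k with ⟨c, d⟩
  cases a <;>
    simp [baseCol, dStar, dPair, dBit, dOther] <;>
    exact sel_mkP_notbit _ _ _

lemma base_inj {s s' : B q} {p p' : Pairs q} {b b' : Bool}
    (hr : baseRow s p b = baseRow s' p' b') (hc : baseCol s p b = baseCol s' p' b') :
    s = s' ∧ p = p' ∧ b = b' := by
  have h := base_own s p b
  have h' := base_own s' p' b'
  constructor
  · rw [← dStar_enc s p b, hr, hc, dStar_enc]
  constructor
  · rw [← dPair_enc s p b h, ← dPair_enc s' p' b' h']
    congr 1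
  · rw [← dBit_enc s p b, hr, hc, dBit_enc]

lemma baseRow_fst (s : B q) (p : Pairs q) (b : Bool) : (baseRow s p b).1 = !s.1 := rfl

lemma baseCol_ne (s : B q) (p : Pairs q) (b : Bool) : baseCol s p b ≠ baseCol s p (!b) := by
  rcases s with ⟨a, ρ⟩
  cases a <;> simp [baseCol] <;> intro hc
  · exact sel_ne p (!b) (by rw [Bool.not_not]; exact hc)
  · exact sel_ne p (!b) (by rw [Bool.not_not]; exact hc)

lemma baseRow_ne (s : B q) (p : Pairs q) (b : Bool) : baseRow s p b ≠ baseRow s p (!b) := by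
  intro hr
  have : sel p b = sel p (!b) := congrArg Prod.snd hr
  exact sel_ne p b this

variable {m t : ℕ}

abbrev RowT (q m : ℕ) := Fin m → B q
abbrev TsubT (m t : ℕ) := {s : Finset (Fin m) // s.card = t}
abbrev ColT (q m t : ℕ) := TsubT m t × (Fin t → Fin q × Fin q)
abbrev LabelT (q m t : ℕ) := (Fin m → B q) × (Fin t → Pairs q)
abbrev ChoT (m t : ℕ) := TsubT m t × (Fin t → Bool)

/-- Order isomorphism enumerating the `t`-subset `T`. -/
def eT (T : TsubT m t) : Fin t ≃o {i : Fin m // i ∈ T.1} := T.1.orderIsoOfFin T.2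

lemma eT_symm_coe (T : TsubT m t) (j : Fin t) (h : ((eT T j : {i // i ∈ T.1}) : Fin m) ∈ T.1) :
    (eT T).symm ⟨(eT T j : {i // i ∈ T.1}), h⟩ = j := by
  have h1 : (⟨((eT T j : {i // i ∈ T.1}) : Fin m), h⟩ : {i // i ∈ T.1}) = eT T j :=
    Subtype.ext rfl
  rw [h1]
  exact (eT T).symm_apply_apply j

lemma eT_coe_symm (T : TsubT m t) (i : Fin m) (h : i ∈ T.1) :
    ((eT T ((eT T).symm ⟨i, h⟩) : {i // i ∈ T.1}) : Fin m) = i := by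
  rw [(eT T).apply_symm_apply]

/-- The star (placement) predicate of the big array. -/
def StarP (r : RowT q m) (k : ColT q m t) : Prop :=
  ∃ j : Fin t, baseStar (r ((eT k.1 j : {i // i ∈ k.1.1}) : Fin m)) (k.2 j)

instance (r : RowT q m) (k : ColT q m t) : Decidable (StarP r k) := by
  unfold StarP; exact inferInstance

/-- Encode a label and a choice `(T, ε)` into a (row, column) cell. -/
def Enc (L : LabelT q m t) (x : ChoT m t) : RowT q m × ColT q m t :=
  (fun i => if h : i ∈ x.1.1 then
      baseRow (L.1 i) (L.2 ((eT x.1).symm ⟨i, h⟩)) (x.2 ((eT x.1).symm ⟨i, h⟩))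
    else L.1 i,
   (x.1, fun j => baseCol (L.1 ((eT x.1 j : {i // i ∈ x.1.1}) : Fin m)) (L.2 j) (x.2 j)))

lemma Enc_col_fst (L : LabelT q m t) (x : ChoT m t) : (Enc L x).2.1 = x.1 := rfl

lemma Enc_col_app (L : LabelT q m t) (x : ChoT m t) (j : Fin t) :
    (Enc L x).2.2 j
      = baseCol (L.1 ((eT x.1 j : {i // i ∈ x.1.1}) : Fin m)) (L.2 j) (x.2 j) := rfl

lemma Enc_row_mem (L : LabelT q m t) (x : ChoT m t) (j : Fin t) :
    (Enc L x).1 ((eT x.1 j : {i // i ∈ x.1.1}) : Fin m)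
      = baseRow (L.1 ((eT x.1 j : {i // i ∈ x.1.1}) : Fin m)) (L.2 j) (x.2 j) := by
  have h : ((eT x.1 j : {i // i ∈ x.1.1}) : Fin m) ∈ x.1.1 := (eT x.1 j).2
  show dite _ _ _ = _
  rw [dif_pos h, eT_symm_coe]

lemma Enc_row_notmem (L : LabelT q m t) (x : ChoT m t) (i : Fin m) (h : i ∉ x.1.1) :
    (Enc L x).1 i = L.1 i := dif_neg h

lemma Enc_nonstar (L : LabelT q m t) (x : ChoT m t) : ¬ StarP (Enc L x).1 (Enc L x).2 := by
  rintro ⟨j, hj⟩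
  rw [Enc_col_fst] at hj  -- may not typecheck; adjust
  exact base_own _ _ _ (by
    have := hj
    rwa [Enc_col_app, Enc_row_mem] at this)

lemma Enc_surj (r : RowT q m) (k : ColT q m t) (hns : ¬ StarP r k) :
    ∃ (L : LabelT q m t) (x : ChoT m t), Enc L x = (r, k) := by
  have hj : ∀ j : Fin t, ¬ baseStar (r ((eT k.1 j : {i // i ∈ k.1.1}) : Fin m)) (k.2 j) :=
    fun j h => hns ⟨j, h⟩
  refine ⟨(fun i => if h : i ∈ k.1.1 then
      dStar (r i) (k.2 ((eT k.1).symm ⟨i, h⟩)) else r i,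
      fun j => dPair (r ((eT k.1 j : {i // i ∈ k.1.1}) : Fin m)) (k.2 j) (hj j)),
    (k.1, fun j => dBit (r ((eT k.1 j : {i // i ∈ k.1.1}) : Fin m)) (k.2 j)), ?_⟩
  have hL1 : ∀ (j : Fin t),
      (if h : ((eT k.1 j : {i // i ∈ k.1.1}) : Fin m) ∈ k.1.1 then
        dStar (r ((eT k.1 j : {i // i ∈ k.1.1}) : Fin m)) (k.2 ((eT k.1).symm ⟨_, h⟩))
      else r ((eT k.1 j : {i // i ∈ k.1.1}) : Fin m))
      = dStar (r ((eT k.1 j : {i // i ∈ k.1.1}) : Fin m)) (k.2 j) := by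
    intro j
    rw [dif_pos (eT k.1 j).2, eT_symm_coe]
  refine Prod.ext ?_ ?_
  · funext i
    by_cases h : i ∈ k.1.1
    · obtain ⟨j, rfl⟩ : ∃ j, ((eT k.1 j : {i // i ∈ k.1.1}) : Fin m) = i :=
        ⟨(eT k.1).symm ⟨i, h⟩, eT_coe_symm k.1 i h⟩
      rw [Enc_row_mem]
      show baseRow (dite _ _ _) _ _ = _
      rw [hL1 j]
      exact enc_dec_row (hj j)
    · rw [Enc_row_notmem _ _ _ h]
      exact dif_neg h
  · refine Prod.ext rfl ?_
    funext j
    rw [Enc_col_app]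
    show baseCol (dite _ _ _) _ _ = _
    rw [hL1 j]
    exact enc_dec_col (hj j)

lemma Enc_inj {L L' : LabelT q m t} {x x' : ChoT m t}
    (hEq : Enc L x = Enc L' x') : L = L' ∧ x = x' := by
  have hT : x.1 = x'.1 := congrArg (fun z : RowT q m × ColT q m t => z.2.1) hEq
  have hrow : (Enc L x).1 = (Enc L' x').1 := congrArg Prod.fst hEq
  have hcol : (Enc L x).2.2 = (Enc L' x').2.2 := congrArg (fun z => z.2.2) hEq
  obtain ⟨T, ε⟩ := x
  obtain ⟨T', ε'⟩ := x'
  simp only at hT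
  subst hT
  have key : ∀ j : Fin t,
      L.1 ((eT T j : {i // i ∈ T.1}) : Fin m) = L'.1 ((eT T j : {i // i ∈ T.1}) : Fin m)
      ∧ L.2 j = L'.2 j ∧ ε j = ε' j := by
    intro j
    have h1 : baseRow (L.1 ((eT T j : {i // i ∈ T.1}) : Fin m)) (L.2 j) (ε j)
        = baseRow (L'.1 ((eT T j : {i // i ∈ T.1}) : Fin m)) (L'.2 j) (ε' j) := by
      rw [← Enc_row_mem L (T, ε) j, ← Enc_row_mem L' (T, ε') j]
      exact congrFun hrow _
    have h2 : baseCol (L.1 ((eT T j : {i // i ∈ T.1}) : Fin m)) (L.2 j) (ε j)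
        = baseCol (L'.1 ((eT T j : {i // i ∈ T.1}) : Fin m)) (L'.2 j) (ε' j) := by
      rw [← Enc_col_app L (T, ε) j, ← Enc_col_app L' (T, ε') j]
      exact congrFun hcol _
    exact base_inj h1 h2
  constructor
  · refine Prod.ext ?_ ?_
    · funext i
      by_cases h : i ∈ T.1
      · obtain ⟨j, rfl⟩ : ∃ j, ((eT T j : {i // i ∈ T.1}) : Fin m) = i :=
          ⟨(eT T).symm ⟨i, h⟩, eT_coe_symm T i h⟩
        exact (key j).1
      · have := congrFun hrow i
        rwa [Enc_row_notmem _ _ _ h, Enc_row_notmem _ _ _ h] at this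
    · funext j; exact (key j).2.1
  · refine Prod.ext rfl ?_
    funext j; exact (key j).2.2

lemma exists_mem_notmem {T T' : TsubT m t} (h : T.1 ≠ T'.1) :
    ∃ i, i ∈ T.1 ∧ i ∉ T'.1 := by
  by_contra hc
  push_neg at hc
  have hsub : T.1 ⊆ T'.1 := fun i hi => hc i hi
  exact h (Finset.eq_of_subset_of_card_le hsub (by rw [T.2, T'.2]))

lemma Enc_cross (L : LabelT q m t) {x x' : ChoT m t} (hne : x ≠ x') :
    (Enc L x).1 ≠ (Enc L x').1 ∧ (Enc L x).2 ≠ (Enc L x').2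
      ∧ StarP (Enc L x).1 (Enc L x').2 := by
  by_cases hT : x.1 = x'.1
  · obtain ⟨T, ε⟩ := x
    obtain ⟨T', ε'⟩ := x'
    simp only at hT
    subst hT
    have hε : ∃ j, ε j ≠ ε' j := by
      by_contra hc
      push_neg at hc
      exact hne (by rw [Prod.ext_iff]; exact ⟨rfl, funext hc⟩)
    obtain ⟨j, hj⟩ := hε
    have hb : ε' j = !(ε j) := by
      cases hε : ε j <;> cases hε' : ε' j <;> simp_all
    refine ⟨?_, ?_, ?_⟩
    · intro h
      have := congrFun h ((eT T j : {i // i ∈ T.1}) : Fin m)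
      rw [Enc_row_mem L (T, ε) j, Enc_row_mem L (T, ε') j] at this
      simp only at this
      rw [hb] at this
      exact baseRow_ne _ _ _ this
    · intro h
      have := congrFun (congrArg Prod.snd h) j
      rw [Enc_col_app L (T, ε) j, Enc_col_app L (T, ε') j] at this
      simp only at this
      rw [hb] at this
      exact baseCol_ne _ _ _ this
    · refine ⟨j, ?_⟩
      show baseStar ((Enc L (T, ε)).1 ((eT T j : {i // i ∈ T.1}) : Fin m))
        ((Enc L (T, ε')).2.2 j)
      rw [show (Enc L (T, ε)).1 ((eT T j : {i // i ∈ T.1}) : Fin m)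
            = baseRow (L.1 ((eT T j : {i // i ∈ T.1}) : Fin m)) (L.2 j) (ε j) from
          Enc_row_mem L (T, ε) j,
        show (Enc L (T, ε')).2.2 j
            = baseCol (L.1 ((eT T j : {i // i ∈ T.1}) : Fin m)) (L.2 j) (ε' j) from rfl,
        hb]
      exact base_cross _ _ _
  · have hTv : x.1.1 ≠ x'.1.1 := fun h => hT (Subtype.ext h)
    refine ⟨?_, ?_, ?_⟩
    · obtain ⟨i, hi, hi'⟩ := exists_mem_notmem hTv
      intro h
      have hc := congrFun h i
      obtain ⟨j, rfl⟩ : ∃ j, ((eT x.1 j : {i // i ∈ x.1.1}) : Fin m) = i :=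
        ⟨(eT x.1).symm ⟨i, hi⟩, eT_coe_symm x.1 i hi⟩
      rw [Enc_row_mem, Enc_row_notmem _ _ _ hi'] at hc
      have := congrArg Prod.fst hc
      rw [baseRow_fst] at this
      exact Bool.not_ne_self _ this
    · intro h
      exact hT (congrArg (fun z : ColT q m t => z.1) h)
    · obtain ⟨i, hi, hi'⟩ := exists_mem_notmem (Ne.symm hTv)
      obtain ⟨j, rfl⟩ : ∃ j, ((eT x'.1 j : {i // i ∈ x'.1.1}) : Fin m) = i :=
        ⟨(eT x'.1).symm ⟨i, hi⟩, eT_coe_symm x'.1 i hi⟩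
      refine ⟨j, ?_⟩
      rw [Enc_col_app]
      rw [show (Enc L x).1 ((eT (Enc L x').2.1 j : {i // i ∈ (Enc L x').2.1.1}) : Fin m)
            = L.1 ((eT x'.1 j : {i // i ∈ x'.1.1}) : Fin m) from
        Enc_row_notmem _ _ _ hi']
      exact base_starrer _ _ _

/-- The PDA array on the structured types. -/
noncomputable def P0 (r : RowT q m) (k : ColT q m t) : Option (LabelT q m t) :=
  if h : ∃ a : LabelT q m t × ChoT m t, Enc a.1 a.2 = (r, k) then some h.choose.1 else none

lemma P0_enc (L : LabelT q m t) (x : ChoT m t) :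
    P0 (Enc L x).1 (Enc L x).2 = some L := by
  have hex : ∃ a : LabelT q m t × ChoT m t, Enc a.1 a.2 = ((Enc L x).1, (Enc L x).2) :=
    ⟨(L, x), rfl⟩
  rw [P0, dif_pos hex]
  have hsp := hex.choose_spec
  have : Enc hex.choose.1 hex.choose.2 = Enc L x := by
    rw [hsp]
  obtain ⟨h1, -⟩ := Enc_inj this
  rw [h1]

lemma P0_some {r : RowT q m} {k : ColT q m t} {L : LabelT q m t}
    (h : P0 r k = some L) : ∃ x : ChoT m t, Enc L x = (r, k) := by
  rw [P0] at h
  split at h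
  · next hex =>
      obtain rfl : hex.choose.1 = L := Option.some_injective _ h
      exact ⟨hex.choose.2, hex.choose_spec⟩
  · exact absurd h (by simp)

lemma P0_none {r : RowT q m} {k : ColT q m t} :
    P0 r k = none ↔ StarP r k := by
  constructor
  · intro h
    rw [P0] at h
    split at h
    · exact absurd h (by simp)
    · next hex =>
        by_contra hns
        obtain ⟨L, x, hLx⟩ := Enc_surj r k hns
        exact hex ⟨(L, x), hLx⟩
  · intro hs
    rw [P0]
    rw [dif_neg]
    rintro ⟨a, ha⟩
    have := Enc_nonstar a.1 a.2
    rw [ha] at this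
    exact this hs

section Counting

lemma card_B : Fintype.card (B q) = 2 * q := by
  simp [Fintype.card_prod]

lemma card_RowT : Fintype.card (RowT q m) = 2 ^ m * q ^ m := by
  rw [Fintype.card_fun, card_B, Fintype.card_fin, mul_pow]

lemma card_TsubT : Fintype.card (TsubT m t) = Nat.choose m t := by
  rw [Fintype.card_finset_len, Fintype.card_fin]

lemma card_ColT : Fintype.card (ColT q m t) = Nat.choose m t * q ^ (2 * t) := by
  rw [Fintype.card_prod, card_TsubT, Fintype.card_fun, Fintype.card_prod,
    Fintype.card_fin, Fintype.card_fin]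
  congr 1
  rw [← pow_two, ← pow_mul]

lemma card_ChoT : Fintype.card (ChoT m t) = Nat.choose m t * 2 ^ t := by
  rw [Fintype.card_prod, card_TsubT, Fintype.card_fun, Fintype.card_bool, Fintype.card_fin]

/-- `Bool × Pairs q` is equivalent to ordered distinct pairs. -/
def pairsBoolEquiv : Bool × Pairs q ≃ {p : Fin q × Fin q // p.1 ≠ p.2} where
  toFun bp := ⟨(sel bp.2 bp.1, sel bp.2 (!bp.1)), sel_ne bp.2 bp.1⟩
  invFun v := (bitOf v.1.1 v.1.2, mkP v.1.1 v.1.2 v.2)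
  left_inv := by
    rintro ⟨b, p⟩
    have h1 := bitOf_sel p b
    have h2 := mkP_sel p b (sel_ne p b)
    simp only
    rw [h1, h2]
  right_inv := by
    rintro ⟨⟨x, y⟩, h⟩
    simp only
    refine Subtype.ext (Prod.ext ?_ ?_)
    · exact sel_mkP_bit x y h
    · exact sel_mkP_notbit x y h

lemma card_nePairs : Fintype.card {p : Fin q × Fin q // p.1 ≠ p.2} = q * (q - 1) := by
  have e : {p : Fin q × Fin q // p.1 ≠ p.2} ≃ (Σ a : Fin q, {b : Fin q // b ≠ a}) := {
    toFun := fun v => ⟨v.1.1, ⟨v.1.2, fun hh => v.2 hh.symm⟩⟩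
    invFun := fun v => ⟨(v.1, v.2.1), fun hh => v.2.2 hh.symm⟩
    left_inv := fun v => rfl
    right_inv := fun v => rfl }
  rw [Fintype.card_congr e, Fintype.card_sigma]
  have : ∀ a : Fin q, Fintype.card {b : Fin q // b ≠ a} = q - 1 := by
    intro a
    rw [Fintype.card_subtype_compl, Fintype.card_subtype_eq, Fintype.card_fin]
  simp only [this, Finset.sum_const, Finset.card_univ, Fintype.card_fin, smul_eq_mul]

lemma card_Pairs_two : 2 * Fintype.card (Pairs q) = q * (q - 1) := by
  have := Fintype.card_congr (pairsBoolEquiv (q := q))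
  rwa [Fintype.card_prod, Fintype.card_bool, card_nePairs] at this

lemma card_LabelT (htm : t ≤ m) :
    Fintype.card (LabelT q m t) = 2 ^ (m - t) * (q - 1) ^ t * q ^ (m + t) := by
  have h2 : (0 : ℕ) < 2 ^ t := Nat.pow_pos (n := t) (by norm_num)
  apply Nat.eq_of_mul_eq_mul_left h2
  rw [Fintype.card_prod, Fintype.card_fun, Fintype.card_fun, card_B,
    Fintype.card_fin, Fintype.card_fin]
  calc 2 ^ t * ((2 * q) ^ m * Fintype.card (Pairs q) ^ t)
      = (2 * q) ^ m * ((2 * Fintype.card (Pairs q)) ^ t) := by ring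
    _ = (2 * q) ^ m * (q * (q - 1)) ^ t := by rw [card_Pairs_two]
    _ = 2 ^ m * (q ^ m * q ^ t) * (q - 1) ^ t := by rw [mul_pow, mul_pow]; ring
    _ = 2 ^ m * q ^ (m + t) * (q - 1) ^ t := by rw [pow_add]
    _ = 2 ^ t * (2 ^ (m - t) * (q - 1) ^ t * q ^ (m + t)) := by
        rw [show 2 ^ m = 2 ^ t * 2 ^ (m - t) by
          rw [← pow_add, Nat.add_sub_cancel' htm]]
        ring

lemma baseStar_iff (v : B q) (kk : Fin q × Fin q) :
    baseStar v kk ↔ v = (false, kk.1) ∨ v = (true, kk.2) := by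
  rcases v with ⟨a, β⟩
  cases a <;> simp [baseStar, Prod.ext_iff]

lemma card_baseStar (kk : Fin q × Fin q) :
    Fintype.card {v : B q // baseStar v kk} = 2 := by
  rw [Fintype.card_subtype]
  rw [show Finset.univ.filter (fun v : B q => baseStar v kk)
        = {(false, kk.1), (true, kk.2)} from ?_]
  · exact Finset.card_pair (by simp)
  · ext v
    simp [baseStar_iff]

lemma card_base_nonstar (kk : Fin q × Fin q) :
    Fintype.card {v : B q // ¬ baseStar v kk} = 2 * q - 2 := by
  rw [Fintype.card_subtype_compl, card_baseStar, card_B]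

/-- The set of star-free rows of a column factorizes. -/
def nonstarEquiv (k : ColT q m t) :
    {r : RowT q m // ∀ j, ¬ baseStar (r ((eT k.1 j : {i // i ∈ k.1.1}) : Fin m)) (k.2 j)}
    ≃ (∀ j : Fin t, {v : B q // ¬ baseStar v (k.2 j)}) × ({i : Fin m // i ∉ k.1.1} → B q) where
  toFun r := (fun j => ⟨r.1 ((eT k.1 j : {i // i ∈ k.1.1}) : Fin m), r.2 j⟩, fun i => r.1 i.1)
  invFun gf := ⟨fun i => if h : i ∈ k.1.1 then (gf.1 ((eT k.1).symm ⟨i, h⟩)).1 else gf.2 ⟨i, h⟩,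
    by
      intro j
      dsimp only
      rw [dif_pos (eT k.1 j).2, eT_symm_coe]
      exact (gf.1 j).2⟩
  left_inv := by
    rintro ⟨r, hr⟩
    refine Subtype.ext ?_
    funext i
    by_cases h : i ∈ k.1.1
    · simp only
      rw [dif_pos h]
      congr 1
      exact eT_coe_symm k.1 i h
    · simp only
      rw [dif_neg h]
  right_inv := by
    rintro ⟨g, f⟩
    refine Prod.ext ?_ ?_
    · funext j
      refine Subtype.ext ?_
      simp only
      rw [dif_pos (eT k.1 j).2, eT_symm_coe]
    · funext i
      simp only
      rw [dif_neg i.2]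

lemma card_nonstar_rows (k : ColT q m t) :
    Fintype.card {r : RowT q m // ¬ StarP r k} = (2 * q - 2) ^ t * (2 * q) ^ (m - t) := by
  have e1 : {r : RowT q m // ¬ StarP r k} ≃
      {r : RowT q m //
        ∀ j, ¬ baseStar (r ((eT k.1 j : {i // i ∈ k.1.1}) : Fin m)) (k.2 j)} :=
    Equiv.subtypeEquivRight (fun r => not_exists)
  rw [Fintype.card_congr (e1.trans (nonstarEquiv k)), Fintype.card_prod, Fintype.card_pi]
  have hco : Fintype.card {i : Fin m // i ∉ k.1.1} = m - t := by
    rw [Fintype.card_subtype_compl]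
    rw [show Fintype.card {i : Fin m // i ∈ k.1.1} = t from
        (Fintype.card_coe k.1.1).trans k.1.2, Fintype.card_fin]
  rw [Fintype.card_fun, card_B, hco]
  simp only [card_base_nonstar]
  rw [Finset.prod_const, Finset.card_univ, Fintype.card_fin]

lemma card_star_filter (htm : t ≤ m) (k : ColT q m t) :
    (Finset.univ.filter fun r : RowT q m => StarP r k).card
      = 2 ^ m * q ^ m - 2 ^ m * (q - 1) ^ t * q ^ (m - t) := by
  have hsplit := Finset.card_filter_add_card_filter_not
    (s := (Finset.univ : Finset (RowT q m))) (fun r => StarP r k)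
  rw [Finset.card_univ, card_RowT] at hsplit
  have hns : (Finset.univ.filter fun r : RowT q m => ¬ StarP r k).card
      = (2 * q - 2) ^ t * (2 * q) ^ (m - t) := by
    rw [← Fintype.card_subtype, card_nonstar_rows]
  have harith : (2 * q - 2) ^ t * (2 * q) ^ (m - t)
      = 2 ^ m * (q - 1) ^ t * q ^ (m - t) := by
    rw [show 2 * q - 2 = 2 * (q - 1) by omega, mul_pow, mul_pow,
      show 2 ^ t * (q-1) ^ t * (2 ^ (m-t) * q ^ (m-t))
        = (2 ^ t * 2 ^ (m-t)) * (q-1) ^ t * q ^ (m-t) by ring,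
      ← pow_add, Nat.add_sub_cancel' htm]
  omega

lemma card_fiber (L : LabelT q m t) [DecidablePred
      (fun rk : RowT q m × ColT q m t => P0 rk.1 rk.2 = some L)] :
    (Finset.univ.filter (fun rk : RowT q m × ColT q m t => P0 rk.1 rk.2 = some L)).card
      = Fintype.card (ChoT m t) := by
  rw [← Fintype.card_subtype]
  refine (Fintype.card_congr (Equiv.ofBijective
    (fun x : ChoT m t =>
      (⟨Enc L x, P0_enc L x⟩ : {rk : RowT q m × ColT q m t // P0 rk.1 rk.2 = some L}))
    ⟨?_, ?_⟩)).symm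
  · intro x x' h
    exact (Enc_inj (congrArg Subtype.val h)).2
  · rintro ⟨⟨r, k⟩, hrk⟩
    obtain ⟨x, hx⟩ := P0_some hrk
    exact ⟨x, Subtype.ext hx⟩

lemma card_filter_equiv {α β : Type*} [Fintype α] [Fintype β] (e : α ≃ β)
    (pa : α → Prop) (pb : β → Prop) [DecidablePred pa] [DecidablePred pb]
    (h : ∀ a, pa a ↔ pb (e a)) :
    (Finset.univ.filter pa).card = (Finset.univ.filter pb).card := by
  refine Finset.card_equiv e (fun i => ?_)
  simp [Finset.mem_filter, h]

end Counting

end SchemeC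

open SchemeC

theorem scheme_C (q m t : ℕ) (hq : 2 ≤ q) (ht : 0 < t) (htm : t ≤ m) :
    ∃ Z : ℕ,
      (Z : ℚ) = (2 ^ m * q ^ m : ℕ) *
        (1 - (((q : ℚ) - 1) / (q : ℚ)) ^ t) ∧
      ∃ P : Fin (2 ^ m * q ^ m) →
          Fin (Nat.choose m t * q ^ (2 * t)) →
          Option (Fin (2 ^ (m - t) * (q - 1) ^ t * q ^ (m + t))),
        IsPDA Z P ∧ PDARegular (Nat.choose m t * 2 ^ t) P := by
  classical
  have hle : 2 ^ m * (q - 1) ^ t * q ^ (m - t) ≤ 2 ^ m * q ^ m := by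
    calc 2 ^ m * (q - 1) ^ t * q ^ (m - t) ≤ 2 ^ m * q ^ t * q ^ (m - t) := by
          exact Nat.mul_le_mul_right _ (Nat.mul_le_mul_left _
            (Nat.pow_le_pow_left (Nat.sub_le q 1) t))
      _ = 2 ^ m * q ^ m := by rw [mul_assoc, ← pow_add, Nat.add_sub_cancel' htm]
  refine ⟨2 ^ m * q ^ m - 2 ^ m * (q - 1) ^ t * q ^ (m - t), ?_, ?_⟩
  · -- the rational identity for Z
    have hq0 : (q : ℚ) ≠ 0 := Nat.cast_ne_zero.2 (by omega)
    have hcast : ((q - 1 : ℕ) : ℚ) = (q : ℚ) - 1 := by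
      have h1 : (1 : ℕ) ≤ q := by omega
      push_cast [h1]
      ring
    have hqm : (q : ℚ) ^ m = (q : ℚ) ^ (m - t) * (q : ℚ) ^ t := by
      rw [← pow_add, Nat.sub_add_cancel htm]
    rw [Nat.cast_sub hle]
    push_cast [hcast]
    rw [div_pow, hqm]
    field_simp
  · -- the PDA itself
    have hF : Fintype.card (RowT q m) = 2 ^ m * q ^ m := card_RowT
    have hK : Fintype.card (ColT q m t) = Nat.choose m t * q ^ (2 * t) := card_ColT
    have hS : Fintype.card (LabelT q m t) = 2 ^ (m - t) * (q - 1) ^ t * q ^ (m + t) :=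
      card_LabelT htm
    let eF : Fin (2 ^ m * q ^ m) ≃ RowT q m := (Fintype.equivFinOfCardEq hF).symm
    let eK : Fin (Nat.choose m t * q ^ (2 * t)) ≃ ColT q m t :=
      (Fintype.equivFinOfCardEq hK).symm
    let eS : LabelT q m t ≃ Fin (2 ^ (m - t) * (q - 1) ^ t * q ^ (m + t)) :=
      Fintype.equivFinOfCardEq hS
    refine ⟨fun j k => (P0 (eF j) (eK k)).map eS, ⟨?_, ?_, ?_⟩, ?_⟩
    · -- C1
      intro k
      have h1 : ∀ j, ((P0 (eF j) (eK k)).map eS = none) ↔ StarP (eF j) (eK k) := by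
        intro j
        rw [Option.map_eq_none_iff]
        exact P0_none
      rw [card_filter_equiv eF _ (fun r => StarP r (eK k)) h1, card_star_filter htm]
    · -- C2
      intro s
      obtain ⟨T₀, -, hT₀⟩ := Finset.exists_subset_card_eq
        (s := (Finset.univ : Finset (Fin m))) (n := t) (by simpa using htm)
      set L := eS.symm s with hL
      set x : ChoT m t := (⟨T₀, hT₀⟩, fun _ => false) with hx
      refine ⟨eF.symm (Enc L x).1, eK.symm (Enc L x).2, ?_⟩
      show (P0 (eF (eF.symm (Enc L x).1)) (eK (eK.symm (Enc L x).2))).map eS = some s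
      rw [Equiv.apply_symm_apply, Equiv.apply_symm_apply, P0_enc]
      simp [hL]
    · -- C3
      intro j₁ j₂ k₁ k₂ s hne h₁ h₂
      have conv : ∀ {r : Fin (2 ^ m * q ^ m)} {k : Fin (Nat.choose m t * q ^ (2 * t))},
          (P0 (eF r) (eK k)).map eS = some s → P0 (eF r) (eK k) = some (eS.symm s) := by
        intro r k h
        obtain ⟨a, ha, hae⟩ := Option.map_eq_some_iff.1 h
        rw [ha]
        rw [← hae, Equiv.symm_apply_apply]
      obtain ⟨x₁, hx₁⟩ := P0_some (conv h₁)
      obtain ⟨x₂, hx₂⟩ := P0_some (conv h₂)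
      have hxne : x₁ ≠ x₂ := by
        rintro rfl
        apply hne
        have h12 := hx₁.symm.trans hx₂
        have hj : eF j₁ = eF j₂ := congrArg Prod.fst h12
        have hk : eK k₁ = eK k₂ := congrArg Prod.snd h12
        rw [Prod.ext_iff]
        exact ⟨eF.injective hj, eK.injective hk⟩
      obtain ⟨-, -, hstar12⟩ := Enc_cross (eS.symm s) hxne
      obtain ⟨-, -, hstar21⟩ := Enc_cross (eS.symm s) (Ne.symm hxne)
      have hr₁ : (Enc (eS.symm s) x₁).1 = eF j₁ := congrArg Prod.fst hx₁
      have hc₁ : (Enc (eS.symm s) x₁).2 = eK k₁ := congrArg Prod.snd hx₁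
      have hr₂ : (Enc (eS.symm s) x₂).1 = eF j₂ := congrArg Prod.fst hx₂
      have hc₂ : (Enc (eS.symm s) x₂).2 = eK k₂ := congrArg Prod.snd hx₂
      constructor
      · rw [Option.map_eq_none_iff, P0_none]
        rw [← hr₁, ← hc₂]
        exact hstar12
      · rw [Option.map_eq_none_iff, P0_none]
        rw [← hr₂, ← hc₁]
        exact hstar21
    · -- regularity
      intro s
      have hiff : ∀ jk : Fin (2 ^ m * q ^ m) × Fin (Nat.choose m t * q ^ (2 * t)),
          ((P0 (eF jk.1) (eK jk.2)).map eS = some s)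
            ↔ (P0 (eF jk.1) (eK jk.2) = some (eS.symm s)) := by
        intro jk
        constructor
        · intro h
          obtain ⟨a, ha, hae⟩ := Option.map_eq_some_iff.1 h
          rw [ha, ← hae, Equiv.symm_apply_apply]
        · intro h
          rw [h]
          simp
      rw [card_filter_equiv (eF.prodCongr eK) _
        (fun rk : RowT q m × ColT q m t => P0 rk.1 rk.2 = some (eS.symm s))
        (fun jk => hiff jk), card_fiber, card_ChoT]
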